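/- Let D_1, D_2, ... be random variables taking values in {−2,−1,0,1,2} that are δ-dominating for some 0 < δ ≤ 2, and let γ > 1. Define Risk_ℓ = ∏_{i=1}^ℓ (1 − δ/(2γ))/(1 − D_i/(2γ)). Then for any stopping time τ (adapted to the D_i) and any α ∈ (0,1], Pr[Risk_τ ≤ α] ≤ α. -/

import Mathlib

open MeasureTheory Finset

/-- The natural filtration: the σ-algebra generated by `D 0, …, D (t-1)`. -/
noncomputable def natFiltration {Ω : Type*} (D : ℕ → Ω → ℝ) (t : ℕ) : MeasurableSpace Ω :=
  ⨆ i ∈ Finset.range t, MeasurableSpace.comap (D i) inferInstance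

/-- Kaplan–Markov test validity for δ-dominating discrepancy sequences: if the `D t` take
values in `{−2,−1,0,1,2}`, are `δ`-dominating with `0 < δ ≤ 2`, `γ > 1`, and `τ` is a
stopping time adapted to the `D t`, then for any `α ∈ (0,1]`,
`Pr[ ∏_{i<τ} (1 − δ/(2γ))/(1 − D i/(2γ)) ≤ α ] ≤ α`. -/
theorem kaplan_markov_test_risk
    {Ω : Type*} [MeasurableSpace Ω] (μ : Measure Ω) [IsProbabilityMeasure μ]
    (D : ℕ → Ω → ℝ) (hmeas : ∀ t, Measurable (D t))
    (hrange : ∀ t ω, D t ω ∈ ({-2, -1, 0, 1, 2} : Set ℝ))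
    (δ γ : ℝ) (hδ0 : 0 < δ) (hδ2 : δ ≤ 2) (hγ : 1 < γ)
    (hdom : ∀ t, ∀ᵐ ω ∂μ, δ ≤ (μ[D t | natFiltration D t]) ω)
    (τ : Ω → ℕ)
    (hτ : ∀ n, MeasurableSet[natFiltration D n] {ω | τ ω = n})
    (α : ℝ) (hα0 : 0 < α) (hα1 : α ≤ 1) :
    μ {ω | ∏ i ∈ Finset.range (τ ω), (1 - δ / (2 * γ)) / (1 - D i ω / (2 * γ)) ≤ α} ≤
      ENNReal.ofReal α := by
  classical
  have h2γ0 : (0:ℝ) < 2 * γ := by linarith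
  set c : ℝ := 1 - δ / (2 * γ) with hc_def
  have hc0 : 0 < c := by
    have : δ / (2 * γ) < 1 := (div_lt_one h2γ0).2 (by linarith)
    simp only [hc_def]; linarith
  -- bounds on D
  have hDabs : ∀ t ω, |D t ω| ≤ 2 := by
    intro t ω
    have h := hrange t ω
    simp only [Set.mem_insert_iff, Set.mem_singleton_iff] at h
    rcases h with h | h | h | h | h <;> rw [h] <;> norm_num
  set g : ℕ → Ω → ℝ := fun t ω => 1 - D t ω / (2 * γ) with hg_def
  have hg0 : ∀ t ω, 0 < g t ω := by
    intro t ω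
    have h1 : D t ω / (2 * γ) < 1 := by
      rw [div_lt_one h2γ0]
      have := (abs_le.mp (hDabs t ω)).2; linarith
    simp only [hg_def]; linarith
  have hg2 : ∀ t ω, g t ω ≤ 2 := by
    intro t ω
    have h1 : -1 < D t ω / (2 * γ) := by
      rw [neg_lt, ← neg_div]
      rw [div_lt_one h2γ0]
      have := (abs_le.mp (hDabs t ω)).1; linarith
    simp only [hg_def]; linarith
  -- the filtration
  have hFle : ∀ n, natFiltration D n ≤ ‹MeasurableSpace Ω› := fun n =>
    iSup₂_le fun i _ => (hmeas i).comap_le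
  have hFmono : Monotone (natFiltration D) := by
    intro a b hab
    exact biSup_mono fun i hi => Finset.mem_range.2 ((Finset.mem_range.1 hi).trans_le hab)
  set ℱ : Filtration ℕ ‹MeasurableSpace Ω› := ⟨natFiltration D, hFmono, hFle⟩ with hℱ_def
  have hDm : ∀ {i n : ℕ}, i < n → Measurable[natFiltration D n] (D i) := by
    intro i n hin
    have hle : MeasurableSpace.comap (D i) inferInstance ≤ natFiltration D n :=
      le_iSup₂ (f := fun i (_ : i ∈ Finset.range n) => MeasurableSpace.comap (D i)
        inferInstance) i (Finset.mem_range.2 hin)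
    exact fun s hs => hle _ ⟨s, hs, rfl⟩
  -- the supermartingale
  set M : ℕ → Ω → ℝ := fun n ω => ∏ i ∈ Finset.range n, g i ω / c with hM_def
  have hMnonneg : ∀ n ω, 0 ≤ M n ω := fun n ω =>
    Finset.prod_nonneg fun i _ => le_of_lt (div_pos (hg0 i ω) hc0)
  have hMpos : ∀ n ω, 0 < M n ω := fun n ω =>
    Finset.prod_pos fun i _ => div_pos (hg0 i ω) hc0
  have hMbound : ∀ n ω, M n ω ≤ (2 / c) ^ n := by
    intro n ω
    calc M n ω ≤ ∏ _i ∈ Finset.range n, (2 / c) :=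
          Finset.prod_le_prod (fun i _ => le_of_lt (div_pos (hg0 i ω) hc0))
            (fun i _ => (div_le_div_iff_of_pos_right hc0).2 (hg2 i ω))
      _ = (2 / c) ^ n := by rw [Finset.prod_const, Finset.card_range]
  have hMmeas : ∀ n, Measurable[natFiltration D n] (M n) := by
    intro n
    apply Finset.measurable_prod
    intro i hi
    exact (measurable_const.sub ((hDm (Finset.mem_range.1 hi)).div_const _)).div_const _
  have hIntBdd : ∀ (f : Ω → ℝ) (C : ℝ), Measurable f → (∀ ω, |f ω| ≤ C) → Integrable f μ :=
    fun f C hf hb => ⟨hf.aestronglyMeasurable,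
      HasFiniteIntegral.of_bounded (C := C) (Filter.Eventually.of_forall fun ω => hb ω)⟩
  have hMint : ∀ n, Integrable (M n) μ := by
    intro n
    refine hIntBdd (M n) ((2 / c) ^ n) ((hMmeas n).mono (hFle n) le_rfl) fun ω => ?_
    rw [abs_of_nonneg (hMnonneg n ω)]; exact hMbound n ω
  have hgint : ∀ n, Integrable (fun ω => g n ω / c) μ := by
    intro n
    refine hIntBdd _ (2 / c) ((measurable_const.sub ((hmeas n).div_const _)).div_const _) fun ω => ?_
    rw [abs_of_nonneg (le_of_lt (div_pos (hg0 n ω) hc0))]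
    exact (div_le_div_iff_of_pos_right hc0).2 (hg2 n ω)
  -- conditional expectation bound
  have hcond : ∀ n, μ[(fun ω => g n ω / c)|natFiltration D n] ≤ᵐ[μ] fun _ => 1 := by
    intro n
    have hrw : (fun ω => g n ω / c) = c⁻¹ • ((fun _ => (1:ℝ)) - (2 * γ)⁻¹ • D n) := by
      funext ω
      simp only [hg_def, Pi.smul_apply, Pi.sub_apply, smul_eq_mul]
      rw [div_eq_inv_mul]
      ring
    have hDint : Integrable (D n) μ := hIntBdd (D n) 2 (hmeas n) (hDabs n)
    have h1 : μ[(fun ω => g n ω / c)|natFiltration D n] =ᵐ[μ]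
        c⁻¹ • μ[((fun _ => (1:ℝ)) - (2 * γ)⁻¹ • D n)|natFiltration D n] := by
      rw [hrw]; exact condExp_smul _ _ _
    have h2 : μ[((fun _ => (1:ℝ)) - (2 * γ)⁻¹ • D n)|natFiltration D n] =ᵐ[μ]
        (fun _ => (1:ℝ)) - (2 * γ)⁻¹ • μ[D n|natFiltration D n] := by
      refine (condExp_sub (integrable_const 1) (hDint.smul _) _).trans ?_
      rw [condExp_const (hFle n)]
      filter_upwards [condExp_smul (μ := μ)
        (m := natFiltration D n) ((2 * γ)⁻¹) (D n)] with ω hω2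
      simp only [Pi.sub_apply]
      rw [hω2]
    filter_upwards [h1, h2, hdom n] with ω hω1 hω2 hω3
    rw [hω1]
    simp only [Pi.smul_apply, smul_eq_mul]
    rw [hω2]
    simp only [Pi.sub_apply, Pi.smul_apply, smul_eq_mul]
    have hle : 1 - (2 * γ)⁻¹ * (μ[D n|natFiltration D n]) ω ≤ c := by
      have : (2 * γ)⁻¹ * δ ≤ (2 * γ)⁻¹ * (μ[D n|natFiltration D n]) ω :=
        mul_le_mul_of_nonneg_left hω3 (le_of_lt (inv_pos.2 h2γ0))
      simp only [hc_def]
      rw [div_eq_inv_mul]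
      linarith
    calc c⁻¹ * (1 - (2 * γ)⁻¹ * (μ[D n|natFiltration D n]) ω) ≤ c⁻¹ * c :=
          mul_le_mul_of_nonneg_left hle (le_of_lt (inv_pos.2 hc0))
      _ = 1 := inv_mul_cancel₀ (ne_of_gt hc0)
  have hsuper : Supermartingale M ℱ μ := by
    refine supermartingale_nat (fun n => (hMmeas n).stronglyMeasurable) hMint ?_
    intro n
    have hsplit : M (n + 1) = M n * fun ω => g n ω / c := by
      funext ω
      simp only [hM_def, Pi.mul_apply]
      exact Finset.prod_range_succ _ _
    have hfgint : Integrable (M n * fun ω => g n ω / c) μ := hsplit ▸ hMint (n + 1)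
    have hpull : μ[M (n + 1)|natFiltration D n] =ᵐ[μ]
        M n * μ[(fun ω => g n ω / c)|natFiltration D n] := by
      rw [hsplit]
      exact condExp_mul_of_stronglyMeasurable_left (hMmeas n).stronglyMeasurable hfgint (hgint n)
    filter_upwards [hpull, hcond n] with ω hω1 hω2
    calc (μ[M (n + 1)|ℱ n]) ω = M n ω * (μ[(fun ω => g n ω / c)|natFiltration D n]) ω := hω1
      _ ≤ M n ω * 1 := mul_le_mul_of_nonneg_left hω2 (hMnonneg n ω)
      _ = M n ω := mul_one _
  -- stopping times
  have hstop : IsStoppingTime ℱ (fun ω => (τ ω : WithTop ℕ)) :=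
    isStoppingTime_of_measurableSet_eq (fun n => by simpa using hτ n)
  have hτmin : ∀ n : ℕ, IsStoppingTime ℱ (fun ω => min (τ ω) n) := fun n => hstop.min_const n
  have hminbdd : ∀ n : ℕ, ∀ ω, min (τ ω : WithTop ℕ) n ≤ n := fun n ω => min_le_right _ _
  -- integrability of the stopped value
  have hsvint : ∀ n : ℕ, Integrable (stoppedValue M fun ω => min (τ ω) n) μ := by
    intro n
    rw [stoppedValue_eq (hminbdd n)]
    simp only [Finset.sum_apply]
    apply integrable_finset_sum
    intro i _
    exact (hMint i).indicator (hFle i _ ((hτmin n).measurableSet_eq i))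
  -- optional stopping : expectation ≤ 1
  have hOS : ∀ n : ℕ, ∫ ω, stoppedValue M (fun ω => min (τ ω) n) ω ∂μ ≤ 1 := by
    intro n
    have hsub : Submartingale (-M) ℱ μ := hsuper.neg
    have h := hsub.expected_stoppedValue_mono (isStoppingTime_const ℱ 0) (hτmin n)
      (fun ω => le_min zero_le zero_le) (hminbdd n)
    have h0 : ∫ ω, stoppedValue (-M) (fun _ => (0:ℕ)) ω ∂μ = -1 := by
      simp [stoppedValue, hM_def]
    have key : ∫ ω, stoppedValue M (fun ω => min (τ ω) n) ω ∂μ =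
        -∫ ω, stoppedValue (-M) (fun ω => min (τ ω) n) ω ∂μ := by
      rw [← integral_neg]
      congr 1
      funext ω
      simp [stoppedValue]
    replace h := h0.symm.le.trans h
    rw [key]
    linarith
  -- Markov's inequality at level α⁻¹
  have hMark : ∀ n : ℕ,
      μ {ω | α⁻¹ ≤ stoppedValue M (fun ω => min (τ ω) n) ω} ≤ ENNReal.ofReal α := by
    intro n
    have hnn : 0 ≤ᵐ[μ] stoppedValue M fun ω => min (τ ω) n :=
      Filter.Eventually.of_forall fun ω => hMnonneg _ _
    have h := mul_meas_ge_le_integral_of_nonneg hnn (hsvint n) α⁻¹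
    have h2 : (μ {ω | α⁻¹ ≤ stoppedValue M (fun ω => min (τ ω) n) ω}).toReal ≤ α := by
      have h3 := h.trans (hOS n)
      calc (μ {ω | α⁻¹ ≤ stoppedValue M (fun ω => min (τ ω) n) ω}).toReal
          = α * (α⁻¹ * (μ {ω | α⁻¹ ≤ stoppedValue M (fun ω => min (τ ω) n) ω}).toReal) := by
            rw [← mul_assoc, mul_inv_cancel₀ (ne_of_gt hα0), one_mul]
        _ ≤ α * 1 := mul_le_mul_of_nonneg_left h3 (le_of_lt hα0)
        _ = α := mul_one _
    calc μ {ω | α⁻¹ ≤ stoppedValue M (fun ω => min (τ ω) n) ω}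
        = ENNReal.ofReal (μ {ω | α⁻¹ ≤ stoppedValue M (fun ω => min (τ ω) n) ω}).toReal :=
          (ENNReal.ofReal_toReal (measure_ne_top μ _)).symm
      _ ≤ ENNReal.ofReal α := ENNReal.ofReal_le_ofReal h2
  -- the target event
  set S : Set Ω := {ω | ∏ i ∈ Finset.range (τ ω), c / (1 - D i ω / (2 * γ)) ≤ α} with hS_def
  have hSsub : ∀ n : ℕ, S ∩ {ω | τ ω ≤ n} ⊆
      {ω | α⁻¹ ≤ stoppedValue M (fun ω => min (τ ω) n) ω} := by
    intro n ω hω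
    obtain ⟨hω1, hω2⟩ := hω
    have hmin : min (τ ω : WithTop ℕ) n = τ ω := min_eq_left (by exact_mod_cast hω2)
    have hω1' : ∏ i ∈ Finset.range (τ ω), c / g i ω ≤ α := hω1
    have hppos : 0 < ∏ i ∈ Finset.range (τ ω), c / g i ω :=
      Finset.prod_pos fun i _ => div_pos hc0 (hg0 i ω)
    have hmul : (∏ i ∈ Finset.range (τ ω), c / g i ω) * M (τ ω) ω = 1 := by
      simp only [hM_def]
      rw [← Finset.prod_mul_distrib]
      refine Finset.prod_eq_one fun i _ => ?_
      rw [div_mul_div_comm, mul_comm c (g i ω)]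
      exact div_self (ne_of_gt (mul_pos (hg0 i ω) hc0))
    show α⁻¹ ≤ stoppedValue M (fun ω => min (τ ω) n) ω
    simp only [stoppedValue, hmin]
    change α⁻¹ ≤ M (τ ω) ω
    have hM_eq : M (τ ω) ω = (∏ i ∈ Finset.range (τ ω), c / g i ω)⁻¹ :=
      eq_inv_of_mul_eq_one_right hmul
    rw [hM_eq]
    exact inv_anti₀ hppos hω1'
  have hS_union : S = ⋃ n, S ∩ {ω | τ ω ≤ n} := by
    ext ω
    simp only [Set.mem_iUnion, Set.mem_inter_iff, Set.mem_setOf_eq]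
    exact ⟨fun h => ⟨τ ω, h, le_rfl⟩, fun ⟨n, h, _⟩ => h⟩
  have hdir : Directed (· ⊆ ·) fun n => S ∩ {ω | τ ω ≤ n} := by
    refine Monotone.directed_le fun a b hab => ?_
    exact Set.inter_subset_inter_right _ fun ω hω => le_trans hω hab
  calc μ S = μ (⋃ n, S ∩ {ω | τ ω ≤ n}) := by rw [← hS_union]
    _ = ⨆ n, μ (S ∩ {ω | τ ω ≤ n}) := hdir.measure_iUnion
    _ ≤ ENNReal.ofReal α := iSup_le fun n => (measure_mono (hSsub n)).trans (hMark n)
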